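/- For two probability mass functions p, q on a finite state space S, it holds that KL(p,q) ≥ (log(e/2) / max(p_max, q_max)) · Σ_{s∈S} (p(s) − q(s))², where p_max = max_s p(s) and q_max = max_s q(s), and KL(p,q) = Σ_s p(s) log(p(s)/q(s)). -/

import Mathlib

open Real Finset

/-- Scalar inequality on `(0,1]`. -/
lemma lemA {t : ℝ} (ht0 : 0 < t) (ht1 : t ≤ 1) :
    (1 - Real.log 2) * (t - 1) ^ 2 ≤ t * Real.log t - t + 1 := by
  set c : ℝ := 1 - Real.log 2 with hc
  set f : ℝ → ℝ := fun x => x * Real.log x - x + 1 - c * (x - 1) ^ 2 with hf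
  have hlog2 : Real.log 2 > 0.6931471803 := Real.log_two_gt_d9
  have hderiv : ∀ x ∈ Set.Ioi (0 : ℝ),
      HasDerivAt f (Real.log x - 2 * c * (x - 1)) x := by
    intro x hx
    have h1 : HasDerivAt (fun x : ℝ => x * Real.log x) (Real.log x + 1) x :=
      Real.hasDerivAt_mul_log (ne_of_gt hx)
    have h2 : HasDerivAt (fun x : ℝ => c * (x - 1) ^ 2) (c * (2 * (x - 1))) x := by
      have : HasDerivAt (fun x : ℝ => (x - 1) ^ 2) (2 * (x - 1) ^ 1 * 1) x :=
        ((hasDerivAt_id x).sub_const 1).pow 2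
      simpa using this.const_mul c
    have h3 := ((h1.sub (hasDerivAt_id' (x := x))).add_const 1).sub h2
    refine h3.congr_deriv ?_
    ring
  have hanti : AntitoneOn f (Set.Icc t 1) := by
    apply antitoneOn_of_deriv_nonpos (convex_Icc t 1)
    · intro x hx
      exact ((hderiv x (lt_of_lt_of_le ht0 hx.1)).continuousAt).continuousWithinAt
    · intro x hx
      rw [interior_Icc] at hx
      exact ((hderiv x (ht0.trans hx.1)).differentiableAt).differentiableWithinAt
    · intro x hx
      rw [interior_Icc] at hx
      have hx0 : 0 < x := ht0.trans hx.1
      rw [(hderiv x hx0).deriv]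
      have hlx : Real.log x ≤ x - 1 := Real.log_le_sub_one_of_pos hx0
      nlinarith [hx.2, hlog2]
  have h1 : f 1 = 0 := by simp [hf]
  have := hanti (Set.mem_Icc.2 ⟨le_refl t, ht1⟩) (Set.mem_Icc.2 ⟨ht1, le_refl 1⟩) ht1
  rw [h1] at this
  simp only [hf] at this
  linarith

/-- Scalar inequality on `[1,∞)`. -/
lemma lemB {t : ℝ} (ht1 : 1 ≤ t) :
    (1 - Real.log 2) * (t - 1) ^ 2 ≤ t ^ 2 * Real.log t - t ^ 2 + t := by
  set c : ℝ := 1 - Real.log 2 with hc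
  set f : ℝ → ℝ := fun x => x ^ 2 * Real.log x - x ^ 2 + x - c * (x - 1) ^ 2 with hf
  have hlog2 : Real.log 2 > 0.6931471803 := Real.log_two_gt_d9
  have hderiv : ∀ x ∈ Set.Ioi (0 : ℝ),
      HasDerivAt f (2 * x * Real.log x + x - 2 * x + 1 - 2 * c * (x - 1)) x := by
    intro x hx
    have hsq : HasDerivAt (fun x : ℝ => x ^ 2) (2 * x) x := by
      simpa using hasDerivAt_pow 2 x
    have hl : HasDerivAt Real.log x⁻¹ x := Real.hasDerivAt_log (ne_of_gt hx)
    have h1 : HasDerivAt (fun x : ℝ => x ^ 2 * Real.log x)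
        (2 * x * Real.log x + x ^ 2 * x⁻¹) x := hsq.mul hl
    have h2 : HasDerivAt (fun x : ℝ => c * (x - 1) ^ 2) (c * (2 * (x - 1))) x := by
      have : HasDerivAt (fun x : ℝ => (x - 1) ^ 2) (2 * (x - 1) ^ 1 * 1) x :=
        ((hasDerivAt_id x).sub_const 1).pow 2
      simpa using this.const_mul c
    have hx' : x ≠ 0 := ne_of_gt hx
    have h3 := ((h1.sub hsq).add (hasDerivAt_id' (x := x))).sub h2
    refine h3.congr_deriv ?_
    have e : x ^ 2 * x⁻¹ = x := by field_simp; try ring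
    rw [e]
    ring
  have hmono : MonotoneOn f (Set.Icc 1 t) := by
    apply monotoneOn_of_deriv_nonneg (convex_Icc 1 t)
    · intro x hx
      have hx0 : (0:ℝ) < x := lt_of_lt_of_le one_pos hx.1
      exact ((hderiv x hx0).continuousAt).continuousWithinAt
    · intro x hx
      rw [interior_Icc] at hx
      have hx0 : (0:ℝ) < x := lt_of_lt_of_le one_pos hx.1.le
      exact ((hderiv x hx0).differentiableAt).differentiableWithinAt
    · intro x hx
      rw [interior_Icc] at hx
      have hx0 : (0:ℝ) < x := lt_of_lt_of_le one_pos hx.1.le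
      rw [(hderiv x hx0).deriv]
      have hlx : 1 - x⁻¹ ≤ Real.log x := Real.one_sub_inv_le_log_of_pos hx0
      have hxi : x * x⁻¹ = 1 := mul_inv_cancel₀ (ne_of_gt hx0)
      have h2x : 2 * x * Real.log x ≥ 2 * x - 2 := by nlinarith [hx.1.le]
      nlinarith [hx.1.le, hlog2]
  have h1 : f 1 = 0 := by simp [hf]
  have := hmono (Set.mem_Icc.2 ⟨le_refl 1, ht1⟩) (Set.mem_Icc.2 ⟨ht1, le_refl t⟩) ht1
  rw [h1] at this
  simp only [hf] at this
  linarith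

/-- Per-term inequality. -/
lemma perterm {a b : ℝ} (ha : 0 ≤ a) (hb : 0 ≤ b) (hab : 0 < a → 0 < b) :
    (1 - Real.log 2) * (a - b) ^ 2 ≤
      max a b * (a * Real.log (a / b) - a + b) := by
  set c : ℝ := 1 - Real.log 2 with hc
  have hc1 : c ≤ 1 := by
    have := Real.log_two_gt_d9; simp only [hc]; linarith
  rcases eq_or_lt_of_le hb with hb0 | hb0
  · -- b = 0, hence a = 0
    have hb' : b = 0 := hb0.symm
    have ha' : a = 0 := by
      by_contra h
      have h2 := hab (lt_of_le_of_ne ha (Ne.symm h))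
      rw [hb'] at h2
      exact lt_irrefl 0 h2
    simp [ha', hb']
  rcases eq_or_lt_of_le ha with ha0 | ha0
  · -- a = 0
    have ha' : a = 0 := ha0.symm
    subst ha'
    rw [max_eq_right hb]
    simp only [zero_mul, zero_sub, zero_add, neg_zero, sub_zero, zero_div, Real.log_zero]
    nlinarith
  set L := Real.log (a / b) with hL
  rcases le_or_gt a b with hab' | hab'
  · -- a ≤ b : use lemA with t = a/b
    have ht0 : 0 < a / b := div_pos ha0 hb0
    have ht1 : a / b ≤ 1 := (div_le_one hb0).2 hab'
    have h := lemA ht0 ht1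
    have e1 : b ^ 2 * (c * (a / b - 1) ^ 2) = c * (a - b) ^ 2 := by
      field_simp; try ring
    have e2 : b ^ 2 * ((a / b) * L - a / b + 1) = b * (a * L - a + b) := by
      field_simp; try ring
    have := mul_le_mul_of_nonneg_left h (le_of_lt (by positivity : (0:ℝ) < b ^ 2))
    rw [e1, e2] at this
    rw [max_eq_right hab']
    exact this
  · -- b < a : use lemB with t = a/b
    have ht1 : 1 ≤ a / b := (one_le_div hb0).2 hab'.le
    have h := lemB ht1
    have e1 : b ^ 2 * (c * (a / b - 1) ^ 2) = c * (a - b) ^ 2 := by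
      field_simp; try ring
    have e2 : b ^ 2 * ((a / b) ^ 2 * L - (a / b) ^ 2 + a / b) = a * (a * L - a + b) := by
      field_simp; try ring
    have := mul_le_mul_of_nonneg_left h (le_of_lt (by positivity : (0:ℝ) < b ^ 2))
    rw [e1, e2] at this
    rw [max_eq_left hab'.le]
    exact this

/-- Nonnegativity of each Bregman-type term. -/
lemma gnonneg {a b : ℝ} (ha : 0 ≤ a) (hb : 0 ≤ b) (hab : 0 < a → 0 < b) :
    0 ≤ a * Real.log (a / b) - a + b := by
  rcases eq_or_lt_of_le ha with ha0 | ha0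
  · simp [← ha0, hb]
  have hb0 : 0 < b := hab ha0
  have ht0 : 0 < a / b := div_pos ha0 hb0
  have h := Real.one_sub_inv_le_log_of_pos ht0
  have hinv : (a / b)⁻¹ = b / a := by
    rw [inv_div]
  rw [hinv] at h
  have h2 := mul_le_mul_of_nonneg_left h ha
  have e : a * (1 - b / a) = a - b := by field_simp
  rw [e] at h2
  linarith

/-- The Kullback–Leibler divergence between two pmfs on a finite set. -/
noncomputable def KLdiv {S : Type*} [Fintype S] (p q : S → ℝ) : ℝ :=
  ∑ s, p s * Real.log (p s / q s)

/-- lower bound on KL divergence via the squared `ℓ₂` distance: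
`KL(p,q) ≥ (log(e/2) / max(p_max, q_max)) · Σ_s (p s − q s)²`,
where `log(e/2) = 1 − log 2`. -/
theorem kl_ge_l2 {S : Type*} [Fintype S] [Nonempty S] (p q : S → ℝ)
    (hp0 : ∀ s, 0 ≤ p s) (hq0 : ∀ s, 0 ≤ q s)
    (hp1 : ∑ s, p s = 1) (hq1 : ∑ s, q s = 1)
    (hpq : ∀ s, 0 < p s → 0 < q s) :
    (1 - Real.log 2) /
        (max (Finset.univ.sup' Finset.univ_nonempty p)
             (Finset.univ.sup' Finset.univ_nonempty q)) *
      (∑ s, (p s - q s) ^ 2) ≤ KLdiv p q := by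
  set c : ℝ := 1 - Real.log 2 with hc
  set M : ℝ := max (Finset.univ.sup' Finset.univ_nonempty p)
       (Finset.univ.sup' Finset.univ_nonempty q) with hM
  -- M > 0
  obtain ⟨s₀, hs₀⟩ : ∃ s, 0 < p s := by
    by_contra h
    push_neg at h
    have : ∑ s, p s = 0 :=
      Finset.sum_eq_zero fun s _ => le_antisymm (h s) (hp0 s)
    rw [this] at hp1; norm_num at hp1
  have hMpos : 0 < M := by
    calc (0:ℝ) < p s₀ := hs₀
      _ ≤ Finset.univ.sup' Finset.univ_nonempty p := Finset.le_sup' p (mem_univ s₀)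
      _ ≤ M := le_max_left _ _
  have hmaxle : ∀ s, max (p s) (q s) ≤ M := fun s =>
    max_le_max (Finset.le_sup' p (mem_univ s)) (Finset.le_sup' q (mem_univ s))
  -- per-term bound
  have key : ∀ s, c * (p s - q s) ^ 2 ≤
      M * (p s * Real.log (p s / q s) - p s + q s) := by
    intro s
    have h1 := perterm (hp0 s) (hq0 s) (hpq s)
    have h2 := gnonneg (hp0 s) (hq0 s) (hpq s)
    calc c * (p s - q s) ^ 2
        ≤ max (p s) (q s) * (p s * Real.log (p s / q s) - p s + q s) := h1
      _ ≤ M * (p s * Real.log (p s / q s) - p s + q s) :=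
          mul_le_mul_of_nonneg_right (hmaxle s) h2
  -- sum up
  have hsum : c * (∑ s, (p s - q s) ^ 2) ≤
      M * ∑ s, (p s * Real.log (p s / q s) - p s + q s) := by
    rw [Finset.mul_sum, Finset.mul_sum]
    exact Finset.sum_le_sum fun s _ => key s
  have hsum2 : ∑ s, (p s * Real.log (p s / q s) - p s + q s) = KLdiv p q := by
    simp only [KLdiv]
    rw [Finset.sum_add_distrib, Finset.sum_sub_distrib, hp1, hq1]
    ring
  rw [hsum2] at hsum
  rw [div_mul_eq_mul_div, div_le_iff₀ hMpos]
  linarith [hsum]
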